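/- The Nijenhuis tensor N(X,Y) = 2([JX,JY]_m - [X,Y]_m - J([X,JY]_m) - J([JX,Y]_m)) of the almost complex structure J on diff_0(S^1) vanishes identically. In particular N(f_m, f_n) = N(f_m, g_n) = N(g_m, g_n) = 0 for all m, n ≥ 1. -/

import Mathlib

/-- index type for the basis `{f_{k+1}} ∪ {g_{k+1}}` of `diff_0(S¹)`:
`Sum.inl k` stands for `f_{k+1} = cos((k+1)t)`, `Sum.inr k` for `g_{k+1} = sin((k+1)t)`. -/
abbrev Idx := ℕ ⊕ ℕ

/-- `diff_0(S¹)`, modelled as the free vector space on the basis `{f_k, g_k : k ≥ 1}`. -/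
abbrev V := Idx →₀ ℝ

/-- `f_k = cos(kt)` as an element of `diff_0(S¹)` (with `f_0` projected to `0`). -/
noncomputable def Fb : ℕ → V := fun k =>
  if k = 0 then 0 else Finsupp.single (Sum.inl (k - 1)) 1

/-- `g_k = sin(kt)` as an element of `diff_0(S¹)` (with `g_0 = 0`). -/
noncomputable def Gb : ℕ → V := fun k =>
  if k = 0 then 0 else Finsupp.single (Sum.inr (k - 1)) 1

/-- `θ_k = 2hk + (c/12)(k³ - k)` -/
noncomputable def th (c h : ℝ) (k : ℤ) : ℝ := 2 * h * k + c / 12 * ((k : ℝ) ^ 3 - k)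

/-- `λ_{m,n} = (2n+m)θ_m / (2θ_{m+n})` -/
noncomputable def lam (c h : ℝ) (m n : ℤ) : ℝ :=
  (2 * (n : ℝ) + m) * th c h m / (2 * th c h (m + n))

/-- `|M - N|` for natural numbers -/
def dN (M N : ℕ) : ℕ := max M N - min M N

/-- `sign (M - N)` -/
noncomputable def sg (M N : ℕ) : ℝ := if N < M then 1 else -1

/-- the projected bracket `[·,·]_m` on basis elements, given by
`[f_M, f_N]_m = ((M-N)/2) g_{M+N} + ((M+N)/2) sign(M-N) g_{|M-N|}`,
`[g_M, g_N]_m = ((N-M)/2) g_{M+N} + ((M+N)/2) sign(M-N) g_{|M-N|}`,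
`[f_M, g_N]_m = ((N-M)/2) f_{M+N} + ((M+N)/2) f_{|M-N|}` (the `f_0` term being projected away),
and `[g_M, f_N]_m = -[f_N, g_M]_m`. -/
noncomputable def brB : Idx → Idx → V
  | Sum.inl m, Sum.inl n =>
      (((m : ℝ) - n) / 2) • Gb (m + n + 2)
        + (((m : ℝ) + n + 2) / 2 * sg (m + 1) (n + 1)) • Gb (dN (m + 1) (n + 1))
  | Sum.inl m, Sum.inr n =>
      (((n : ℝ) - m) / 2) • Fb (m + n + 2)
        + (((m : ℝ) + n + 2) / 2) • Fb (dN (m + 1) (n + 1))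
  | Sum.inr m, Sum.inl n =>
      -((((m : ℝ) - n) / 2) • Fb (m + n + 2)
        + (((m : ℝ) + n + 2) / 2) • Fb (dN (m + 1) (n + 1)))
  | Sum.inr m, Sum.inr n =>
      (((n : ℝ) - m) / 2) • Gb (m + n + 2)
        + (((m : ℝ) + n + 2) / 2 * sg (m + 1) (n + 1)) • Gb (dN (m + 1) (n + 1))

/-- bilinear extension of a map given on basis elements -/
noncomputable def bil (φ : Idx → Idx → V) (x y : V) : V :=
  x.sum fun i a => y.sum fun j b => (a * b) • φ i j

/-- the projected (mean-zero) bracket `[·,·]_m` on `diff_0(S¹)` -/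
noncomputable def brm : V → V → V := bil brB

/-- the inner product `B` on basis elements: `B(f_M, f_N) = B(g_M, g_N) = (θ_M/2)δ_{M,N}`,
`B(f_M, g_N) = 0`. -/
noncomputable def ipB (c h : ℝ) : Idx → Idx → ℝ
  | Sum.inl m, Sum.inl n => if m = n then th c h (m + 1) / 2 else 0
  | Sum.inr m, Sum.inr n => if m = n then th c h (m + 1) / 2 else 0
  | _, _ => 0

/-- the inner product `B(f,g) = ω_{c,h}(f, Jg)` on `diff_0(S¹)` -/
noncomputable def Bf (c h : ℝ) (x y : V) : ℝ :=
  x.sum fun i a => y.sum fun j b => a * b * ipB c h i j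

/-- the almost complex structure `J` on basis elements: `J f_k = -g_k`, `J g_k = f_k` -/
noncomputable def JB : Idx → V
  | Sum.inl k => -(Finsupp.single (Sum.inr k) 1)
  | Sum.inr k => Finsupp.single (Sum.inl k) 1

/-- the almost complex structure `J` on `diff_0(S¹)` -/
noncomputable def Jm (x : V) : V := x.sum fun i a => a • JB i

/-- the Nijenhuis tensor
`N(X,Y) = 2([JX,JY]_m - [X,Y]_m - J([X,JY]_m) - J([JX,Y]_m))` -/
noncomputable def Nij (x y : V) : V :=
  (2 : ℝ) • (brm (Jm x) (Jm y) - brm x y - Jm (brm x (Jm y)) - Jm (brm (Jm x) y))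


section Aux

lemma Jm_zero : Jm 0 = 0 := by simp [Jm]

lemma Jm_single (i : Idx) (r : ℝ) : Jm (Finsupp.single i r) = r • JB i := by
  simp [Jm, Finsupp.sum_single_index]

lemma Jm_add (x y : V) : Jm (x + y) = Jm x + Jm y := by
  classical
  simp [Jm]
  exact Finsupp.sum_add_index (by simp) (by intros; rw [add_smul])

lemma Jm_smul (c : ℝ) (x : V) : Jm (c • x) = c • Jm x := by
  classical
  rw [Jm, Jm, Finsupp.sum_smul_index (by simp), Finsupp.smul_sum]
  simp [mul_smul]

lemma Jm_neg (x : V) : Jm (-x) = -Jm x := by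
  rw [← neg_one_smul ℝ x, Jm_smul, neg_one_smul]

lemma Jm_Fb (k : ℕ) : Jm (Fb k) = -Gb k := by
  unfold Fb Gb
  split
  · simp [Jm_zero]
  · simp [Jm_single, JB]

lemma Jm_Gb (k : ℕ) : Jm (Gb k) = Fb k := by
  unfold Fb Gb
  split
  · simp [Jm_zero]
  · simp [Jm_single, JB]

lemma brm_zero_left (y : V) : brm 0 y = 0 := by simp [brm, bil]

lemma brm_zero_right (x : V) : brm x 0 = 0 := by simp [brm, bil]

lemma brm_single_single (i j : Idx) :
    brm (Finsupp.single i 1) (Finsupp.single j 1) = brB i j := by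
  simp [brm, bil, Finsupp.sum_single_index]

lemma brm_add_left (x x' y : V) : brm (x + x') y = brm x y + brm x' y := by
  classical
  simp only [brm, bil]
  exact Finsupp.sum_add_index (by simp) (by intros; simp [add_mul, add_smul, Finsupp.sum_add])

lemma brm_add_right (x y y' : V) : brm x (y + y') = brm x y + brm x y' := by
  classical
  simp only [brm, bil]
  rw [← Finsupp.sum_add]
  refine Finsupp.sum_congr fun i _ => ?_
  exact Finsupp.sum_add_index (by simp) (by intros; simp [mul_add, add_smul])

lemma brm_smul_left (c : ℝ) (x y : V) : brm (c • x) y = c • brm x y := by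
  classical
  simp only [brm, bil]
  rw [Finsupp.sum_smul_index (by simp), Finsupp.smul_sum]
  refine Finsupp.sum_congr fun i _ => ?_
  rw [Finsupp.smul_sum]
  refine Finsupp.sum_congr fun j _ => ?_
  rw [mul_assoc, mul_smul]

lemma brm_smul_right (c : ℝ) (x y : V) : brm x (c • y) = c • brm x y := by
  classical
  simp only [brm, bil]
  rw [Finsupp.smul_sum]
  refine Finsupp.sum_congr fun i _ => ?_
  rw [Finsupp.sum_smul_index (by simp), Finsupp.smul_sum]
  refine Finsupp.sum_congr fun j _ => ?_
  rw [smul_smul]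
  ring_nf

lemma brm_neg_left (x y : V) : brm (-x) y = -brm x y := by
  rw [← neg_one_smul ℝ x, brm_smul_left, neg_one_smul]

lemma brm_neg_right (x y : V) : brm x (-y) = -brm x y := by
  rw [← neg_one_smul ℝ y, brm_smul_right, neg_one_smul]

lemma Nij_single_single (i j : Idx) :
    Nij (Finsupp.single i 1) (Finsupp.single j 1) = 0 := by
  have h : ∀ i : Idx, Jm (Finsupp.single i 1) = JB i := fun i => by
    rw [Jm_single, one_smul]
  rcases i with m | m <;> rcases j with n | n <;>
    simp only [Nij, h, JB, brm_neg_left, brm_neg_right, brm_single_single, neg_neg, Jm_neg] <;>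
    simp only [brB, Jm_add, Jm_smul, Jm_neg, Jm_Fb, Jm_Gb] <;>
    module

lemma Nij_add_left (x x' y : V) : Nij (x + x') y = Nij x y + Nij x' y := by
  simp only [Nij, Jm_add, brm_add_left]
  module

lemma Nij_add_right (x y y' : V) : Nij x (y + y') = Nij x y + Nij x y' := by
  simp only [Nij, Jm_add, brm_add_right]
  module

lemma Nij_smul_left (c : ℝ) (x y : V) : Nij (c • x) y = c • Nij x y := by
  simp only [Nij, Jm_smul, brm_smul_left]
  module

lemma Nij_smul_right (c : ℝ) (x y : V) : Nij x (c • y) = c • Nij x y := by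
  simp only [Nij, Jm_smul, brm_smul_right]
  module

lemma Nij_zero_left (y : V) : Nij 0 y = 0 := by
  simp [Nij, Jm_zero, brm_zero_left]

lemma Nij_zero_right (x : V) : Nij x 0 = 0 := by
  simp [Nij, Jm_zero, brm_zero_right]

lemma Nij_single_left (i : Idx) (y : V) : Nij (Finsupp.single i 1) y = 0 := by
  classical
  induction y using Finsupp.induction with
  | zero => exact Nij_zero_right _
  | single_add j b f hjf hb ih =>
      rw [Nij_add_right, ih, add_zero, ← mul_one b, ← Finsupp.smul_single',
        Nij_smul_right, Nij_single_single, smul_zero]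

lemma Nij_eq_zero (x y : V) : Nij x y = 0 := by
  classical
  induction x using Finsupp.induction with
  | zero => exact Nij_zero_left _
  | single_add i b f hif hb ih =>
      rw [Nij_add_left, ih, add_zero, ← mul_one b, ← Finsupp.smul_single',
        Nij_smul_left, Nij_single_left, smul_zero]

end Aux

/-- The Nijenhuis tensor of `J` vanishes identically on `diff_0(S¹)`;
in particular it vanishes on the basis elements. -/
theorem nijenhuis_vanishes :
    (∀ x y : V, Nij x y = 0) ∧
    (∀ m n : ℕ, 1 ≤ m → 1 ≤ n →
      Nij (Fb m) (Fb n) = 0 ∧ Nij (Fb m) (Gb n) = 0 ∧ Nij (Gb m) (Gb n) = 0) := by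
  refine ⟨Nij_eq_zero, fun m n _ _ => ⟨Nij_eq_zero _ _, Nij_eq_zero _ _, Nij_eq_zero _ _⟩⟩
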